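/- Let d = 1 and let ξ ∈ ℕ^ℤ be the configuration with ξ(x) = 1 for all x ≠ 0 and ξ(0) = 2. Then ξ is not stabilizable. -/

import Mathlib

open MeasureTheory Filter Topology
open scoped ENNReal NNReal

/-- Sites of the lattice `ℤ^d`. -/
abbrev Site (d : ℕ) := Fin d → ℤ

/-- Sandpile configurations: `X = ℕ^{ℤ^d}`. -/
abbrev Config (d : ℕ) := Site d → ℕ

/-- Nearest-neighbor adjacency on `ℤ^d` (`ℓ¹`-distance one). -/
def Adjacent {d : ℕ} (x y : Site d) : Prop :=
  (∑ i, (x i - y i).natAbs) = 1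

/-- Sum of the values of `f` over the `2d` nearest neighbors of `y`. -/
def nbrSum {d : ℕ} {M : Type*} [AddCommMonoid M] (f : Site d → M) (y : Site d) : M :=
  ∑ i : Fin d, (f (Function.update y i (y i + 1)) + f (Function.update y i (y i - 1)))

/-- The left limit `T(t-, x, η)` of a (monotone, `ℕ`-valued) toppling function. -/
noncomputable def leftVal {d : ℕ} (T : NNReal → Site d → Config d → ℕ)
    (t : NNReal) (x : Site d) (η : Config d) : ℕ :=
  sSup ((fun s => T s x η) '' Set.Iio t)

/-- A toppling procedure on `ℤ^d` (Definition 2.1): a measurable map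
`T : [0,∞) × ℤ^d × X → ℕ` such that (a) `T(0,x,η) = 0`; (b) `t ↦ T(t,x,η)` is
right-continuous, nondecreasing, with jumps of size at most one; (c) finitely many
jumps in every finite time interval; (d) no infinite backward chain of topplings. -/
structure TopplingProcedure (d : ℕ) where
  T : NNReal → Site d → Config d → ℕ
  measurable : ∀ x : Site d, Measurable fun p : NNReal × Config d => T p.1 x p.2
  init : ∀ (x : Site d) (η : Config d), T 0 x η = 0
  mono : ∀ (x : Site d) (η : Config d), Monotone fun t => T t x η
  jumpLe : ∀ (x : Site d) (η : Config d) (t : NNReal), T t x η ≤ leftVal T t x η + 1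
  rightCont : ∀ (x : Site d) (η : Config d) (t : NNReal),
    ∃ ε : NNReal, 0 < ε ∧ ∀ s, t ≤ s → s < t + ε → T s x η = T t x η
  finJumps : ∀ (x : Site d) (η : Config d) (b : NNReal),
    {t : NNReal | t ≤ b ∧ leftVal T t x η < T t x η}.Finite
  noBackwardChain : ∀ η : Config d, ¬ ∃ (xs : ℕ → Site d) (ts : ℕ → NNReal),
    (∀ i, Adjacent (xs (i + 1)) (xs i)) ∧ StrictAnti ts ∧
    (∀ i, leftVal T (ts i) (xs i) η < T (ts i) (xs i) η)

namespace TopplingProcedure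

variable {d : ℕ}

/-- The configuration `η_t = η − Δ T(t,·,η)` at time `t` (as a `ℤ`-valued function). -/
def configAt (P : TopplingProcedure d) (η : Config d) (t : NNReal) (y : Site d) : ℤ :=
  (η y : ℤ) + nbrSum (fun x => (P.T t x η : ℤ)) y - 2 * d * (P.T t y η : ℤ)

/-- The configuration `η_{t-}` just before time `t`. -/
noncomputable def configLeft (P : TopplingProcedure d) (η : Config d) (t : NNReal)
    (y : Site d) : ℤ :=
  (η y : ℤ) + nbrSum (fun x => (leftVal P.T t x η : ℤ)) y - 2 * d * (leftVal P.T t y η : ℤ)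

/-- Site `x` topples at time `t` if `T(t,x,η) > T(t-,x,η)`. -/
def TopplesAt (P : TopplingProcedure d) (η : Config d) (x : Site d) (t : NNReal) : Prop :=
  leftVal P.T t x η < P.T t x η

/-- A toppling procedure is legal if only unstable sites are toppled:
whenever `x` topples at time `t > 0`, `η_{t-}(x) ≥ 2d`. -/
def Legal (P : TopplingProcedure d) : Prop :=
  ∀ (η : Config d) (t : NNReal) (x : Site d), 0 < t → P.TopplesAt η x t →
    (2 * d : ℤ) ≤ P.configLeft η t x

/-- `T` is finite for `η` if `T(∞,x,η) = sup_t T(t,x,η) < ∞` for every `x`. -/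
def FiniteFor (P : TopplingProcedure d) (η : Config d) : Prop :=
  ∀ x : Site d, BddAbove (Set.range fun t => P.T t x η)

/-- `T(∞,x,η) = sup_{t ≥ 0} T(t,x,η)`. -/
noncomputable def Tinf (P : TopplingProcedure d) (η : Config d) (x : Site d) : ℕ :=
  sSup (Set.range fun t => P.T t x η)

/-- The limit configuration `η_∞ = η − Δ T(∞,·,η)` (as a `ℤ`-valued function). -/
noncomputable def finalConfig (P : TopplingProcedure d) (η : Config d) (y : Site d) : ℤ :=
  (η y : ℤ) + nbrSum (fun x => (P.Tinf η x : ℤ)) y - 2 * d * (P.Tinf η y : ℤ)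

/-- `T` is stabilizing for `η` if it is finite for `η` and the limit configuration
`η_∞` is stable, i.e. takes values in `{0, 1, …, 2d−1}`. -/
def StabilizingFor (P : TopplingProcedure d) (η : Config d) : Prop :=
  P.FiniteFor η ∧ ∀ y : Site d, 0 ≤ P.finalConfig η y ∧ P.finalConfig η y ≤ 2 * d - 1

end TopplingProcedure

/-- A configuration `η` is stabilizable if there exists a stabilizing legal
toppling procedure for `η`. -/
def Stabilizable {d : ℕ} (η : Config d) : Prop :=
  ∃ P : TopplingProcedure d, P.Legal ∧ P.StabilizingFor η

/-- The shift of a configuration by a lattice vector `v`. -/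
def shiftConfig {d : ℕ} (v : Site d) (η : Config d) : Config d := fun x => η (x + v)

/-- A probability measure on `X` is translation invariant if it is invariant
under all shifts of `ℤ^d`. -/
def TransInvariant {d : ℕ} (μ : Measure (Config d)) : Prop :=
  ∀ v : Site d, Measure.map (shiftConfig v) μ = μ

/-- `μ` is a product measure: under `μ` the coordinates `(η(x))` are i.i.d. -/
def IsProductMeasure {d : ℕ} (μ : Measure (Config d)) : Prop :=
  ProbabilityTheory.iIndepFun
      (fun (x : Site d) (η : Config d) => η x) μ ∧
    ∀ x : Site d, Measure.map (fun η : Config d => η x) μ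
      = Measure.map (fun η : Config d => η (0 : Site d)) μ

/-- `x` belongs to the set `T_∞` of sites that topple during stabilization of `η`. -/
def ToppledInf {d : ℕ} (η : Config d) (x : Site d) : Prop :=
  ∃ P : TopplingProcedure d, P.Legal ∧ P.StabilizingFor η ∧ 0 < P.Tinf η x

/-- `x` belongs to `W_∞ = T_∞ ∪ {x : η_∞(x) > 0}`: `x` topples during stabilization
of `η`, or is nonempty after stabilization. -/
def InWinf {d : ℕ} (η : Config d) (x : Site d) : Prop :=
  ∃ P : TopplingProcedure d, P.Legal ∧ P.StabilizingFor η ∧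
    (0 < P.Tinf η x ∨ 0 < P.finalConfig η x)

/-- `y` lies in the cluster of `x` of the set `S`: `x` and `y` are joined by a
nearest-neighbor path inside `S`. -/
def InClusterOf {d : ℕ} (S : Site d → Prop) (x y : Site d) : Prop :=
  ∃ (k : ℕ) (f : ℕ → Site d), f 0 = x ∧ f k = y ∧ (∀ i ≤ k, S (f i)) ∧
    ∀ i < k, Adjacent (f i) (f (i + 1))


/-- A nonnegative function on `ℤ` which is superharmonic on `{z ≥ 1}` is
nondecreasing from `0` to `1`. -/
lemma superharmonic_mono (m : ℤ → ℤ) (hpos : ∀ z, 0 ≤ m z)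
    (H : ∀ z : ℤ, 1 ≤ z → m (z + 1) + m (z - 1) ≤ 2 * m z) : m 0 ≤ m 1 := by
  by_contra h
  push_neg at h
  have h1 : m 1 - m 0 ≤ -1 := by omega
  have main : ∀ k : ℕ, m ((k : ℤ) + 2) - m ((k : ℤ) + 1) ≤ -1 ∧
      m ((k : ℤ) + 1) ≤ m 1 - (k : ℤ) := by
    intro k
    induction k with
    | zero =>
      have hH := H 1 le_rfl
      norm_num at hH ⊢
      linarith
    | succ k ih =>
      obtain ⟨ih1, ih2⟩ := ih
      have hH := H ((k : ℤ) + 2) (by omega)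
      have e1 : (k : ℤ) + 2 + 1 = ((k + 1 : ℕ) : ℤ) + 2 := by push_cast; ring
      have e2 : (k : ℤ) + 2 - 1 = (k : ℤ) + 1 := by ring
      have e3 : (k : ℤ) + 2 = ((k + 1 : ℕ) : ℤ) + 1 := by push_cast; ring
      rw [e1, e2, e3] at hH
      rw [e3] at ih1
      refine ⟨by linarith, ?_⟩
      push_cast
      rw [show (k : ℤ) + 1 + 1 = ((k + 1 : ℕ) : ℤ) + 1 from by push_cast; ring]
      linarith
  have hk := (main ((m 1).toNat + 1)).2
  have hp := hpos ((((m 1).toNat + 1 : ℕ) : ℤ) + 1)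
  rw [show ((((m 1).toNat + 1 : ℕ)) : ℤ) = (m 1).toNat + 1 by push_cast; ring] at hk hp
  rw [Int.toNat_of_nonneg (hpos 1)] at hk hp
  linarith

/-- Example 2.7: in `d = 1`, the configuration with height 1 everywhere except
height 2 at the origin is not stabilizable. -/
theorem statement17 :
    ¬ Stabilizable (fun x : Site 1 => if x = 0 then 2 else 1) := by
  rintro ⟨P, -, -, hstab⟩
  set ξ : Config 1 := fun x => if x = 0 then 2 else 1 with hξ
  set n : ℤ → ℤ := fun z => (P.Tinf ξ (fun _ => z) : ℤ) with hn
  have hnpos : ∀ z, 0 ≤ n z := fun z => Int.natCast_nonneg _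
  have hfc : ∀ z : ℤ, P.finalConfig ξ (fun _ => z)
      = (if z = 0 then 2 else 1) + (n (z + 1) + n (z - 1)) - 2 * n z := by
    intro z
    have hup : ∀ w : ℤ, Function.update (fun _ : Fin 1 => z) 0 w = (fun _ => w) := by
      intro w; funext i; rw [Subsingleton.elim i 0]; simp
    have h0 : ((fun _ : Fin 1 => z) = (0 : Site 1)) ↔ z = 0 := by
      constructor
      · intro h; exact congrFun h 0
      · intro h; funext i; simp [h]
    simp only [TopplingProcedure.finalConfig, nbrSum, Fin.sum_univ_one, hξ, hn]
    simp only [show ((fun _ : Fin 1 => z) (0 : Fin 1)) = z from rfl, hup, h0]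
    push_cast
    by_cases hz : z = 0 <;> simp [hz] <;> ring
  have Hall : ∀ z : ℤ, z ≠ 0 → n (z + 1) + n (z - 1) ≤ 2 * n z := by
    intro z hz
    have h := (hstab (fun _ => z)).2
    rw [hfc z, if_neg hz] at h
    push_cast at h
    linarith
  have k1 : n 0 ≤ n 1 :=
    superharmonic_mono n hnpos (fun z hz => Hall z (by omega))
  have k2 : n 0 ≤ n (-1) := by
    have := superharmonic_mono (fun z => n (-z)) (fun z => hnpos _) (fun z hz => by
      have h := Hall (-z) (by omega)
      have e1 : -z + 1 = -(z - 1) := by ring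
      have e2 : -z - 1 = -(z + 1) := by ring
      rw [e1, e2] at h
      show n (-(z + 1)) + n (-(z - 1)) ≤ 2 * n (-z)
      linarith)
    simpa using this
  have h0 := (hstab (fun _ => (0 : ℤ))).2
  rw [hfc 0, if_pos rfl] at h0
  push_cast at h0
  linarith
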